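/- arXiv:1308.5722 — 7 statements merged into one kernel-verified Lean document; each statement's English description precedes it below -/
import Mathlib

section
/- Let A, η, γ, s be complex numbers with A ≠ 0. Then the determinant of the 3×3 complex matrix with rows (A(1−ηs), 0, A+η), ((1−η)As, 1−A, η−1), (−(1−γ)(1−η)s, −γ, 1−(1−γ)ηA⁻¹) equals −(A−(1−γ))·(A − η − ((2η−1)A − η)s). -/
open Complex

/-- determinant identity for the AMP interface-condition matrix. -/
theorem amp_matrix_det (A η γ s : ℂ) (hA : A ≠ 0) :
    Matrix.det !![A * (1 - η * s), 0, A + η;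
                  (1 - η) * A * s, 1 - A, η - 1;
                  -(1 - γ) * (1 - η) * s, -γ, 1 - (1 - γ) * η * A⁻¹] =
      -(A - (1 - γ)) * (A - η - ((2 * η - 1) * A - η) * s) := by
  rw [Matrix.det_fin_three]
  simp only [Matrix.of_apply, Matrix.cons_val', Matrix.cons_val_zero, Matrix.cons_val_one, Matrix.cons_val_two, Matrix.head_cons, Matrix.tail_cons, Matrix.empty_val', Matrix.cons_val_fin_one, Matrix.vecHead]
  field_simp
  ring
end

section
/- Let η, s be complex numbers, let γ be a real number with 0 ≤ γ ≤ 2, and let A be a complex number with |A| > 1. Then the determinant of the 3×3 complex matrix with rows (A(1−ηs), 0, A+η), ((1−η)As, 1−A, η−1), (−(1−γ)(1−η)s, −γ, 1−(1−γ)ηA⁻¹) vanishes if and only if A − η − ((2η−1)A − η)s = 0. -/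
open Complex

/-- for `0 ≤ γ ≤ 2` and `|A| > 1`, the AMP interface matrix is singular
iff the AMP stability function vanishes. -/
theorem amp_matrix_det_eq_zero_iff (η s : ℂ) (γ : ℝ) (hγ0 : 0 ≤ γ) (hγ2 : γ ≤ 2)
    (A : ℂ) (hA : 1 < ‖A‖) :
    Matrix.det !![A * (1 - η * s), 0, A + η;
                  (1 - η) * A * s, 1 - A, η - 1;
                  -(1 - (γ : ℂ)) * (1 - η) * s, -(γ : ℂ), 1 - (1 - (γ : ℂ)) * η * A⁻¹] = 0 ↔
      A - η - ((2 * η - 1) * A - η) * s = 0 := by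
  have hA0 : A ≠ 0 := by
    intro h
    simp [h] at hA
    linarith
  have key : Matrix.det !![A * (1 - η * s), 0, A + η;
                  (1 - η) * A * s, 1 - A, η - 1;
                  -(1 - (γ : ℂ)) * (1 - η) * s, -(γ : ℂ), 1 - (1 - (γ : ℂ)) * η * A⁻¹]
      = -(A - 1 + (γ : ℂ)) * (A - η - ((2 * η - 1) * A - η) * s) := by
    simp only [Matrix.det_fin_three, Matrix.cons_val', Matrix.cons_val_zero, Matrix.cons_val_one,
      Matrix.head_cons, Matrix.empty_val', Matrix.cons_val_fin_one, Matrix.head_fin_const,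
      Matrix.cons_val_two, Matrix.tail_cons, Matrix.of_apply]
    field_simp
    ring
  rw [key]
  have hne : A - 1 + (γ : ℂ) ≠ 0 := by
    intro h
    have hA1 : A = 1 - (γ : ℂ) := by linear_combination h
    have : ‖A‖ = |1 - γ| := by
      rw [hA1]
      rw [show ((1 : ℂ) - γ) = ((1 - γ : ℝ) : ℂ) by push_cast; ring]
      exact Complex.norm_real _
    rw [this] at hA
    have : |1 - γ| ≤ 1 := abs_le.mpr ⟨by linarith, by linarith⟩
    linarith
  constructor
  · intro h
    rcases mul_eq_zero.mp h with h | h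
    · exact absurd (neg_eq_zero.mp h) hne
    · exact h
  · intro h
    rw [h, mul_zero]
end

section
/- Let A, λx, λy be complex numbers with A ≠ 1 and λy ≠ 0; set r = (A−1+λy)/λy, θ = −A·λx²/(2·λy·(A−1)), R = r − θ, and assume R ≠ 0. Suppose sequences â, b̂, d̂ : ℕ → ℂ satisfy A·â_j = â_j − λy(â_j − â_{j−1}) − iλx·d̂_j for all j ≥ 1, A·b̂_j = b̂_j + λy(b̂_{j+1} − b̂_j) + iλx·d̂_j for all j ≥ 0, and A·d̂_j = d̂_j + (iλx/2)·A·(b̂_j − â_j) for all j ≥ 0. Then for all j ≥ 1: â_j = ((1−θ²)/R)·â_{j−1} − θ·b̂_{j−1} and b̂_j = θ·â_{j−1} + R·b̂_{j−1}. -/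
open Complex

/-- the normal-mode difference equations for the upwind-discretized
acoustic solid imply the two-term transfer-matrix recursion for `(â_j, b̂_j)`.
Here `lx` and `ly` denote `λx = c̄_p·k·Δt` and `λy = c̄_p·Δt/Δy`. -/
theorem solid_transfer_recursion (A lx ly : ℂ) (hA : A ≠ 1) (hly : ly ≠ 0)
    (r θ R : ℂ)
    (hr : r = (A - 1 + ly) / ly)
    (hθ : θ = -(A * lx ^ 2) / (2 * ly * (A - 1)))
    (hR : R = r - θ) (hRne : R ≠ 0)
    (a b d : ℕ → ℂ)
    (ha : ∀ j : ℕ, A * a (j + 1) = a (j + 1) - ly * (a (j + 1) - a j) - I * lx * d (j + 1))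
    (hb : ∀ j : ℕ, A * b j = b j + ly * (b (j + 1) - b j) + I * lx * d j)
    (hd : ∀ j : ℕ, A * d j = d j + (I * lx / 2) * A * (b j - a j)) :
    ∀ j : ℕ,
      a (j + 1) = ((1 - θ ^ 2) / R) * a j - θ * b j ∧
      b (j + 1) = θ * a j + R * b j := by
  have hA1 : A - 1 ≠ 0 := sub_ne_zero.mpr hA
  have h2 : (2 : ℂ) ≠ 0 := two_ne_zero
  have hfac : 2 * ly * (A - 1) ≠ 0 := by
    exact mul_ne_zero (mul_ne_zero h2 hly) hA1
  have hθ' : 2 * ly * (A - 1) * θ = -(A * lx ^ 2) := by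
    rw [hθ]; field_simp
  have hr' : ly * r = A - 1 + ly := by
    rw [hr]; field_simp
  intro j
  have hbj : b (j + 1) = θ * a j + R * b j := by
    have key : 2 * ly * (A - 1) * b (j + 1) = 2 * ly * (A - 1) * (θ * a j + R * b j) := by
      rw [hR]
      linear_combination (-2*(A-1)) * hb j + (-2*I*lx) * hd j +
        (b j - a j) * hθ' + (-2*(A-1)*(b j)) * hr' +
        (-(A*lx^2)*(b j - a j)) * Complex.I_sq
    exact mul_left_cancel₀ hfac key
  have haj : R * a (j + 1) = a j - θ * b (j + 1) := by
    have key : 2 * ly * (A - 1) * (R * a (j + 1)) =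
        2 * ly * (A - 1) * (a j - θ * b (j + 1)) := by
      rw [hR]
      linear_combination (2*(A-1)) * ha j + (-2*I*lx) * hd (j+1) +
        (b (j+1) - a (j+1)) * hθ' + (2*(A-1)*(a (j+1))) * hr' +
        (-(A*lx^2)*(b (j+1) - a (j+1))) * Complex.I_sq
    exact mul_left_cancel₀ hfac key
  refine ⟨?_, hbj⟩
  have : R * a (j + 1) = (1 - θ ^ 2) * a j - θ * R * b j := by
    rw [haj, hbj]; ring
  field_simp
  linear_combination this
end

section
/- Let A, λx, λy be complex numbers with A ≠ 1 and λy ≠ 0; set r = (A−1+λy)/λy, θ = −A·λx²/(2·λy·(A−1)), R = r − θ, B = (R + (1−θ²)/R)/2, and assume θ ≠ 0 and R ≠ 0. Let φs, φb be complex numbers with φs + φb = 2B, φs·φb = 1, and |φs| < 1 < |φb|, and set Q = (φb − R)/θ. Suppose sequences â, b̂, d̂ : ℕ → ℂ satisfy A·â_j = â_j − λy(â_j − â_{j−1}) − iλx·d̂_j for all j ≥ 1, A·b̂_j = b̂_j + λy(b̂_{j+1} − b̂_j) + iλx·d̂_j for all j ≥ 0, A·d̂_j = d̂_j + (iλx/2)·A·(b̂_j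 − â_j) for all j ≥ 0, and |â_j|² + |b̂_j|² + |d̂_j|² → 0 as j → ∞. Then for every j ≥ 0: â_j = φs^j·â_0, b̂_j = Q·â_j, and d̂_j = (iλx(Q−1)A/(2(A−1)))·â_j. -/
open Complex Filter

/-- structure of the decaying normal-mode solutions of the
upwind-discretized acoustic solid: `â_j = φs^j â_0`, `b̂_j = Q â_j`, and
`d̂_j = (iλx(Q−1)A/(2(A−1))) â_j`.  Here `lx = λx = c̄_p·k·Δt` and
`ly = λy = c̄_p·Δt/Δy`. -/
theorem decaying_normal_mode_structure (A lx ly : ℂ) (hA : A ≠ 1) (hly : ly ≠ 0)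
    (r θ R B : ℂ)
    (hr : r = (A - 1 + ly) / ly)
    (hθ : θ = -(A * lx ^ 2) / (2 * ly * (A - 1)))
    (hR : R = r - θ)
    (hB : B = (R + (1 - θ ^ 2) / R) / 2)
    (hθne : θ ≠ 0) (hRne : R ≠ 0)
    (φs φb : ℂ)
    (hsum : φs + φb = 2 * B) (hprod : φs * φb = 1)
    (hφs : ‖φs‖ < 1) (hφb : 1 < ‖φb‖)
    (Q : ℂ) (hQ : Q = (φb - R) / θ)
    (a b d : ℕ → ℂ)
    (ha : ∀ j : ℕ, A * a (j + 1) = a (j + 1) - ly * (a (j + 1) - a j) - I * lx * d (j + 1))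
    (hb : ∀ j : ℕ, A * b j = b j + ly * (b (j + 1) - b j) + I * lx * d j)
    (hd : ∀ j : ℕ, A * d j = d j + (I * lx / 2) * A * (b j - a j))
    (hdecay : Tendsto
      (fun j : ℕ => ‖a j‖ ^ 2 + ‖b j‖ ^ 2 + ‖d j‖ ^ 2)
      atTop (nhds 0)) :
    ∀ j : ℕ,
      a j = φs ^ j * a 0 ∧
      b j = Q * a j ∧
      d j = (I * lx * (Q - 1) * A / (2 * (A - 1))) * a j := by
  have hA1 : A - 1 ≠ 0 := sub_ne_zero.mpr hA
  have hφb0 : φb ≠ 0 := by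
    intro h; rw [h, mul_zero] at hprod; exact one_ne_zero hprod.symm
  -- cleared-denominator versions of the definitions
  have hr' : r * ly = A - 1 + ly := by rw [hr]; field_simp
  have hθ' : θ * (2 * ly * (A - 1)) = -(A * lx ^ 2) := by
    rw [hθ]; field_simp
  have hBR : 2 * B * R = R ^ 2 + 1 - θ ^ 2 := by
    rw [hB]; field_simp; ring
  have hquadB : φb ^ 2 = 2 * B * φb - 1 := by linear_combination φb * hsum - hprod
  have hQ' : Q * θ = φb - R := by rw [hQ]; field_simp
  -- recursion (II): b (j+1) = θ a j + R b j
  have hbrec : ∀ j : ℕ, b (j + 1) = θ * a j + R * b j := by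
    intro j
    have key : ly * (A - 1) * b (j + 1) = ly * (A - 1) * (θ * a j + R * b j) := by
      linear_combination (-(A - 1)) * hb j + (-(I * lx)) * hd j
        + ((b j - a j) / 2) * hθ' + (-(A - 1) * ly * b j) * hR
        + (-(A - 1) * b j) * hr' + (-(lx ^ 2 / 2) * A * (b j - a j)) * Complex.I_sq
    exact mul_left_cancel₀ (mul_ne_zero hly hA1) key
  -- recursion (I): R a (j+1) + θ b (j+1) = a j
  have harec : ∀ j : ℕ, R * a (j + 1) + θ * b (j + 1) = a j := by
    intro j
    have key : ly * (A - 1) * (R * a (j + 1) + θ * b (j + 1)) = ly * (A - 1) * a j := by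
      linear_combination (A - 1) * ha j + (-(I * lx)) * hd (j + 1)
        + ((b (j + 1) - a (j + 1)) / 2) * hθ'
        + ((A - 1) * ly * a (j + 1)) * hR + ((A - 1) * a (j + 1)) * hr'
        + (-(lx ^ 2 / 2) * A * (b (j + 1) - a (j + 1))) * Complex.I_sq
    exact mul_left_cancel₀ (mul_ne_zero hly hA1) key
  -- the φb-mode w j := (R - φb) a j + θ b j satisfies w (j+1) = φb w j
  set w : ℕ → ℂ := fun j => (R - φb) * a j + θ * b j with hw
  have hwrec : ∀ j : ℕ, w (j + 1) = φb * w j := by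
    intro j
    have key : R * w (j + 1) = R * (φb * w j) := by
      simp only [hw]
      linear_combination (R - φb) * harec j + φb * θ * hbrec j
        + (R * a j) * hquadB + (φb * a j) * hBR
    exact mul_left_cancel₀ hRne key
  have hwpow : ∀ j : ℕ, w j = φb ^ j * w 0 := by
    intro j
    induction j with
    | zero => simp
    | succ n ih => rw [hwrec n, ih, pow_succ]; ring
  -- decay of a, b, hence of w
  have habs : ∀ (f : ℕ → ℂ),
      (∀ j, ‖f j‖ ^ 2 ≤
        ‖a j‖ ^ 2 + ‖b j‖ ^ 2 + ‖d j‖ ^ 2) →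
      Tendsto f atTop (nhds 0) := by
    intro f hf
    have h2 : Tendsto (fun j => ‖f j‖ ^ 2) atTop (nhds 0) := by
      refine squeeze_zero (fun j => by positivity) hf hdecay
    have h1 : Tendsto (fun j => ‖f j‖) atTop (nhds 0) := by
      have h3 := h2.sqrt
      rw [Real.sqrt_zero] at h3
      exact h3.congr fun j => Real.sqrt_sq (norm_nonneg _)
    rw [tendsto_zero_iff_norm_tendsto_zero]
    simpa using h1
  have hato : Tendsto a atTop (nhds 0) := by
    refine habs a fun j => ?_
    nlinarith [norm_nonneg (b j), norm_nonneg (d j),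
      sq_nonneg (‖b j‖), sq_nonneg (‖d j‖)]
  have hbto : Tendsto b atTop (nhds 0) := by
    refine habs b fun j => ?_
    nlinarith [sq_nonneg (‖a j‖), sq_nonneg (‖d j‖)]
  have hwto : Tendsto w atTop (nhds 0) := by
    have : Tendsto (fun j => (R - φb) * a j + θ * b j) atTop (nhds ((R - φb) * 0 + θ * 0)) :=
      ((hato.const_mul (R - φb)).add (hbto.const_mul θ))
    simpa using this
  -- |φb| > 1 forces w 0 = 0
  have hw0 : w 0 = 0 := by
    by_contra h0
    have hlow : ∀ j : ℕ, ‖w 0‖ ≤ ‖w j‖ := by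
      intro j
      rw [hwpow j, norm_mul, norm_pow]
      calc ‖w 0‖ = 1 * ‖w 0‖ := (one_mul _).symm
        _ ≤ ‖φb‖ ^ j * ‖w 0‖ :=
            mul_le_mul_of_nonneg_right (one_le_pow₀ hφb.le) (norm_nonneg _)
    have hwabs : Tendsto (fun j => ‖w j‖) atTop (nhds 0) := by
      have := (continuous_norm.tendsto 0).comp hwto
      simpa [Function.comp_def] using this
    have : ‖w 0‖ ≤ 0 := le_of_tendsto_of_tendsto tendsto_const_nhds hwabs
      (Filter.Eventually.of_forall hlow)
    exact h0 (by simpa using le_antisymm this (norm_nonneg _))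
  have hwzero : ∀ j : ℕ, w j = 0 := by
    intro j; rw [hwpow j, hw0, mul_zero]
  -- b j = Q a j
  have hbQ : ∀ j : ℕ, b j = Q * a j := by
    intro j
    have h := hwzero j
    simp only [hw] at h
    have key : θ * b j = θ * (Q * a j) := by
      have : θ * b j = (φb - R) * a j := by linear_combination h
      rw [this]; linear_combination a j * hQ'.symm
    exact mul_left_cancel₀ hθne key
  -- a (j+1) = φs a j
  have harec' : ∀ j : ℕ, a (j + 1) = φs * a j := by
    intro j
    have h1 : φb * a (j + 1) = a j := by
      have := harec j
      rw [hbQ (j + 1)] at this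
      linear_combination this - a (j + 1) * hQ'
    have key : φb * a (j + 1) = φb * (φs * a j) := by
      rw [h1]; linear_combination a j * hprod.symm
    exact mul_left_cancel₀ hφb0 key
  have hapow : ∀ j : ℕ, a j = φs ^ j * a 0 := by
    intro j
    induction j with
    | zero => simp
    | succ n ih => rw [harec' n, ih, pow_succ]; ring
  -- conclusion
  intro j
  refine ⟨hapow j, hbQ j, ?_⟩
  have h := hd j
  rw [hbQ j] at h
  have key : (2 * (A - 1)) * d j = (2 * (A - 1)) * ((I * lx * (Q - 1) * A / (2 * (A - 1))) * a j) := by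
    have h2 : (2 * (A - 1)) * ((I * lx * (Q - 1) * A / (2 * (A - 1))) * a j)
        = I * lx * (Q - 1) * A * a j := by
      field_simp
    rw [h2]; linear_combination 2 * h
  exact mul_left_cancel₀ (by simp [hA1]) key
end

section
/- Let A, λx, λy, η be complex numbers with A ≠ 0, A ≠ 1, and λy ≠ 0; set r = (A−1+λy)/λy, θ = −A·λx²/(2·λy·(A−1)), R = r − θ, B = (R + (1−θ²)/R)/2, and assume θ ≠ 0 and R ≠ 0. Suppose φ is a complex number with |φ| < 1 satisfying φ² − 2Bφ + 1 = 0 and A − η − ((2η−1)A − η)·(1 − Rφ)/θ = 0. Then P_AMP(A) = 0, where P_AMP(A) = α₅A⁵ + α₄A⁴ + α₃A³ + α₂A² + α₁A + α₀ with α₀ = −η² + 2η²λy, α₁ = −8η²λy + 5η² − λx²η², α₂ = 10η²λy − 9η² + 1 + 3λx²η² + 4ηλy − 2η − 2λy, α₃ = −2λyλx² − 2ηλx² + 4λy + λx² + 4ηλyλx² + 7η² − 3 + 6η − 4η²λy − 8ηλy − 2η²λyλx² − 2λx²η², α₄ = 3 − 2λy − 2η² − λx² + 4ηλy − 6η + 2ηλx²,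 α₅ = −1 + 2η. -/
open Complex

/-- any root of the AMP stability function `f(A) = 0` (with
`Qφs = (1 − Rφ)/θ` and `φ` the eigenvalue of modulus less than one) is a root
of the explicit quintic stability polynomial `P_AMP`.
Here `lx = λx = c̄_p·k·Δt` and `ly = λy = c̄_p·Δt/Δy`. -/
theorem amp_root_is_polynomial_root (A lx ly η : ℂ)
    (hA0 : A ≠ 0) (hA1 : A ≠ 1) (hly : ly ≠ 0)
    (r θ R B : ℂ)
    (hr : r = (A - 1 + ly) / ly)
    (hθ : θ = -(A * lx ^ 2) / (2 * ly * (A - 1)))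
    (hR : R = r - θ)
    (hB : B = (R + (1 - θ ^ 2) / R) / 2)
    (hθne : θ ≠ 0) (hRne : R ≠ 0)
    (φ : ℂ) (hφabs : ‖φ‖ < 1)
    (hφ : φ ^ 2 - 2 * B * φ + 1 = 0)
    (hf : A - η - ((2 * η - 1) * A - η) * ((1 - R * φ) / θ) = 0) :
    (-1 + 2 * η) * A ^ 5
      + (3 - 2 * ly - 2 * η ^ 2 - lx ^ 2 + 4 * η * ly - 6 * η + 2 * η * lx ^ 2) * A ^ 4
      + (-2 * ly * lx ^ 2 - 2 * η * lx ^ 2 + 4 * ly + lx ^ 2 + 4 * η * ly * lx ^ 2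
          + 7 * η ^ 2 - 3 + 6 * η - 4 * η ^ 2 * ly - 8 * η * ly
          - 2 * η ^ 2 * ly * lx ^ 2 - 2 * lx ^ 2 * η ^ 2) * A ^ 3
      + (10 * η ^ 2 * ly - 9 * η ^ 2 + 1 + 3 * lx ^ 2 * η ^ 2 + 4 * η * ly
          - 2 * η - 2 * ly) * A ^ 2
      + (-8 * η ^ 2 * ly + 5 * η ^ 2 - lx ^ 2 * η ^ 2) * A
      + (-η ^ 2 + 2 * η ^ 2 * ly) = 0 := by
  have hA1' : A - 1 ≠ 0 := sub_ne_zero.mpr hA1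
  have hlx : lx ≠ 0 := by
    intro h; apply hθne; rw [hθ, h]; ring
  have hBR : 2 * B * R = R ^ 2 + 1 - θ ^ 2 := by
    rw [hB]; field_simp; ring
  have h1 : (A - η) * θ = ((2 * η - 1) * A - η) * (1 - R * φ) := by
    field_simp at hf; linear_combination hf
  have hD : ((2 * η - 1) * A - η) - (A - η) * θ = ((2 * η - 1) * A - η) * R * φ := by
    linear_combination -h1
  have hE2 : (((2 * η - 1) * A - η) - (A - η) * θ) ^ 2
      - (R ^ 2 + 1 - θ ^ 2) * (((2 * η - 1) * A - η) - (A - η) * θ) * ((2 * η - 1) * A - η)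
      + R ^ 2 * ((2 * η - 1) * A - η) ^ 2 = 0 := by
    linear_combination ((2 * η - 1) * A - η) ^ 2 * R ^ 2 * hφ
      + (((2 * η - 1) * A - η) - (A - η) * θ + ((2 * η - 1) * A - η) * R * φ
          - 2 * B * R * ((2 * η - 1) * A - η)) * hD
      + (((2 * η - 1) * A - η) - (A - η) * θ) * ((2 * η - 1) * A - η) * hBR
  have hθc : θ * (2 * ly * (A - 1)) = -(A * lx ^ 2) := by
    rw [hθ]; field_simp
  have hRc : R * (2 * ly * (A - 1)) = 2 * (A - 1) * (A - 1 + ly) + A * lx ^ 2 := by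
    rw [hR, hr, hθ]; field_simp; ring
  have hnum : (((2 * η - 1) * A - η) * (2 * ly * (A - 1)) + (A - η) * (A * lx ^ 2)) ^ 2 * (2 * ly * (A - 1)) ^ 2 - ((2 * (A - 1) * (A - 1 + ly) + A * lx ^ 2) ^ 2 + (2 * ly * (A - 1)) ^ 2 - (-(A * lx ^ 2)) ^ 2) * (((2 * η - 1) * A - η) * (2 * ly * (A - 1)) + (A - η) * (A * lx ^ 2)) * ((2 * η - 1) * A - η) * (2 * ly * (A - 1)) + (2 * (A - 1) * (A - 1 + ly) + A * lx ^ 2) ^ 2 * ((2 * η - 1) * A - η) ^ 2 * (2 * ly * (A - 1)) ^ 2 = 0 := by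
    linear_combination (2 * ly * (A - 1)) ^ 4 * hE2 + ((A - η) * (2 * (((2 * η - 1) * A - η) * (2 * ly * (A - 1)) + (A - η) * (A * lx ^ 2)) - (A - η) * (θ * (2 * ly * (A - 1)) - (-(A * lx ^ 2)))) * (2 * ly * (A - 1)) ^ 2 - (A - η) * ((2 * η - 1) * A - η) * (2 * ly * (A - 1)) * ((2 * (A - 1) * (A - 1 + ly) + A * lx ^ 2) ^ 2 + (2 * ly * (A - 1)) ^ 2 - (-(A * lx ^ 2)) ^ 2) - ((2 * η - 1) * A - η) * (2 * ly * (A - 1)) * ((((2 * η - 1) * A - η) * (2 * ly * (A - 1)) + (A - η) * (A * lx ^ 2)) - (A - η) * (θ * (2 * ly * (A - 1)) - (-(A * lx ^ 2)))) * (2 * (-(A * lx ^ 2)) + (θ * (2 * ly * (A - 1)) - (-(A * lx ^ 2))))) * hθc + (((2 * η - 1) * A - η) * (2 * ly * (A - 1)) * ((((2 * η - 1) * A - η) * (2 * ly * (A - 1)) + (A - η) * (A * lx ^ 2)) - (A - η) * (θ * (2 * ly * (A - 1)) - (-(A * lx ^ 2)))) * (2 * (2 * (A - 1) * (A - 1 +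 ly) + A * lx ^ 2) + (R * (2 * ly * (A - 1)) - (2 * (A - 1) * (A - 1 + ly) + A * lx ^ 2))) - ((2 * η - 1) * A - η) ^ 2 * (2 * ly * (A - 1)) ^ 2 * (2 * (2 * (A - 1) * (A - 1 + ly) + A * lx ^ 2) + (R * (2 * ly * (A - 1)) - (2 * (A - 1) * (A - 1 + ly) + A * lx ^ 2)))) * hRc
  have hc : (-8 : ℂ) * lx ^ 2 * ly * A * (A - 1) ^ 2 ≠ 0 := by
    have : (-8 : ℂ) ≠ 0 := by norm_num
    exact mul_ne_zero (mul_ne_zero (mul_ne_zero (mul_ne_zero this (pow_ne_zero 2 hlx)) hly) hA0) (pow_ne_zero 2 hA1')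
  have key : (-8 : ℂ) * lx ^ 2 * ly * A * (A - 1) ^ 2 *
      ((-1 + 2 * η) * A ^ 5
      + (3 - 2 * ly - 2 * η ^ 2 - lx ^ 2 + 4 * η * ly - 6 * η + 2 * η * lx ^ 2) * A ^ 4
      + (-2 * ly * lx ^ 2 - 2 * η * lx ^ 2 + 4 * ly + lx ^ 2 + 4 * η * ly * lx ^ 2
          + 7 * η ^ 2 - 3 + 6 * η - 4 * η ^ 2 * ly - 8 * η * ly
          - 2 * η ^ 2 * ly * lx ^ 2 - 2 * lx ^ 2 * η ^ 2) * A ^ 3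
      + (10 * η ^ 2 * ly - 9 * η ^ 2 + 1 + 3 * lx ^ 2 * η ^ 2 + 4 * η * ly
          - 2 * η - 2 * ly) * A ^ 2
      + (-8 * η ^ 2 * ly + 5 * η ^ 2 - lx ^ 2 * η ^ 2) * A
      + (-η ^ 2 + 2 * η ^ 2 * ly)) = 0 := by
    linear_combination hnum
  exact mul_left_cancel₀ hc (key.trans (mul_zero _).symm)
end

section
/- Let M and λy be real numbers with M > 0 and λy > 0. Every complex root A of the quadratic polynomial A² + (M + λy − 1)·A − M satisfies |A| ≤ 1 if and only if λy ≤ 2(1 − M). -/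
/-- every complex root of the TP amplification polynomial
`A² + (M + λy − 1)A − M` has modulus at most one iff `λy ≤ 2(1 − M)`.
Here `ly = λy = c̄_p·Δt/Δy` and `M = ρH/(ρ̄Δy)`. -/
theorem tp_1d_stability (M ly : ℝ) (hM : 0 < M) (hly : 0 < ly) :
    (∀ A : ℂ, A ^ 2 + ((M : ℂ) + (ly : ℂ) - 1) * A - (M : ℂ) = 0 → ‖A‖ ≤ 1) ↔
      ly ≤ 2 * (1 - M) := by
  have hb : (0:ℝ) ≤ (M + ly - 1)^2 + 4*M := by nlinarith
  set s : ℝ := Real.sqrt ((M + ly - 1)^2 + 4*M) with hsdef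
  have hsnn : 0 ≤ s := Real.sqrt_nonneg _
  have hs2 : s^2 = (M + ly - 1)^2 + 4*M := Real.sq_sqrt hb
  have hsb : (M + ly - 1)^2 < s^2 := by nlinarith
  constructor
  · intro h
    have hroot : (((( -(M + ly - 1) - s)/2 : ℝ)) : ℂ)^2 +
        ((M : ℂ) + (ly : ℂ) - 1) * ((( -(M + ly - 1) - s)/2 : ℝ) : ℂ) - (M : ℂ) = 0 := by
      have hre : (( -(M + ly - 1) - s)/2)^2 + (M + ly - 1) * (( -(M + ly - 1) - s)/2) - M = 0 := by
        linear_combination hs2 / 4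
      push_cast
      have hc := congrArg (Complex.ofReal) hre
      push_cast at hc ⊢
      linear_combination hc
    have habs := h _ hroot
    rw [Complex.norm_real, Real.norm_eq_abs] at habs
    have h1 : -1 ≤ ( -(M + ly - 1) - s)/2 := (abs_le.mp habs).1
    have h2 : s ≤ 2 - (M + ly - 1) := by linarith
    nlinarith
  · intro hle A hA
    have hr2 : ((( -(M + ly - 1) - s)/2)^2 : ℝ) + (M + ly - 1) * (( -(M + ly - 1) - s)/2) - M = 0 := by
      linear_combination hs2 / 4
    have hr1 : ((( -(M + ly - 1) + s)/2)^2 : ℝ) + (M + ly - 1) * (( -(M + ly - 1) + s)/2) - M = 0 := by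
      linear_combination hs2 / 4
    have h1C : (((( -(M + ly - 1) + s)/2 : ℝ)) : ℂ) + (((( -(M + ly - 1) - s)/2 : ℝ)) : ℂ)
        = -((M : ℂ) + (ly : ℂ) - 1) := by push_cast; ring
    have h2C : (((( -(M + ly - 1) + s)/2 : ℝ)) : ℂ) * (((( -(M + ly - 1) - s)/2 : ℝ)) : ℂ)
        = -(M : ℂ) := by
      have hre : (( -(M + ly - 1) + s)/2) * (( -(M + ly - 1) - s)/2) = -M := by
        linear_combination (-1/4 : ℝ) * hs2
      push_cast
      have hc := congrArg (Complex.ofReal) hre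
      push_cast at hc ⊢
      linear_combination hc
    have key : (A - (((( -(M + ly - 1) + s)/2 : ℝ)) : ℂ)) *
        (A - (((( -(M + ly - 1) - s)/2 : ℝ)) : ℂ)) = 0 := by
      linear_combination hA - A * h1C + h2C
    -- real bounds on the two roots
    have hM1 : M < 1 := by nlinarith
    have hs1 : s ≤ 2 + (M + ly - 1) := by
      have h' : (M + ly - 1)^2 + 4*M ≤ (2 + (M + ly - 1))^2 := by nlinarith
      calc s ≤ Real.sqrt ((2 + (M + ly - 1))^2) := Real.sqrt_le_sqrt h'
        _ = 2 + (M + ly - 1) := Real.sqrt_sq (by nlinarith)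
    have hs2' : s ≤ 2 - (M + ly - 1) := by
      have h' : (M + ly - 1)^2 + 4*M ≤ (2 - (M + ly - 1))^2 := by nlinarith
      calc s ≤ Real.sqrt ((2 - (M + ly - 1))^2) := Real.sqrt_le_sqrt h'
        _ = 2 - (M + ly - 1) := Real.sqrt_sq (by nlinarith)
    have hb1 : |(-(M + ly - 1) + s)/2| ≤ 1 := by
      rw [abs_le]; constructor <;> linarith
    have hb2 : |(-(M + ly - 1) - s)/2| ≤ 1 := by
      rw [abs_le]; constructor <;> linarith
    rcases mul_eq_zero.mp key with h' | h'
    · rw [sub_eq_zero.mp h', Complex.norm_real, Real.norm_eq_abs]; exact hb1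
    · rw [sub_eq_zero.mp h', Complex.norm_real, Real.norm_eq_abs]; exact hb2
end

section
/- Let M and λy be real numbers with M > 0 and λy > 0. Every complex root A of the quadratic polynomial A² + ((λy/2)(1 + λy/M) − 2)·A + (1 − λy/2) satisfies |A| ≤ 1 if and only if λy ≤ 4 and λy ≤ √(M² + 8M) − M. -/
set_option maxHeartbeats 1000000 in
/-- every complex root of the anti-traditional amplification
polynomial `A² + ((λy/2)(1 + λy/M) − 2)A + (1 − λy/2)` has modulus at most one
iff `λy ≤ 4` and `λy ≤ √(M² + 8M) − M`.
Here `ly = λy = c̄_p·Δt/Δy` and `M = ρH/(ρ̄Δy)`. -/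
theorem at_1d_stability (M ly : ℝ) (hM : 0 < M) (hly : 0 < ly) :
    (∀ A : ℂ,
        A ^ 2 + (((ly : ℂ) / 2) * (1 + (ly : ℂ) / (M : ℂ)) - 2) * A + (1 - (ly : ℂ) / 2) = 0 →
          ‖A‖ ≤ 1) ↔
      (ly ≤ 4 ∧ ly ≤ Real.sqrt (M ^ 2 + 8 * M) - M) := by
  have hM0 : (M : ℝ) ≠ 0 := ne_of_gt hM
  obtain ⟨b, hbdef⟩ : ∃ b : ℝ, b = ly / 2 * (1 + ly / M) - 2 := ⟨_, rfl⟩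
  obtain ⟨c, hcdef⟩ : ∃ c : ℝ, c = 1 - ly / 2 := ⟨_, rfl⟩
  have hcoef : ∀ A : ℂ,
      A ^ 2 + (((ly : ℂ) / 2) * (1 + (ly : ℂ) / (M : ℂ)) - 2) * A + (1 - (ly : ℂ) / 2)
        = A ^ 2 + (b : ℂ) * A + (c : ℂ) := by
    intro A
    rw [hbdef, hcdef]
    push_cast
    ring
  have hB1 : 1 + b + c = ly ^ 2 / (2 * M) := by
    rw [hbdef, hcdef]; field_simp; ring
  have hB1' : 0 ≤ 1 + b + c := by rw [hB1]; positivity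
  have hc1 : c ≤ 1 := by rw [hcdef]; linarith
  have hsqM : 0 ≤ M ^ 2 + 8 * M := by nlinarith
  have hsqrt_sq : (Real.sqrt (M ^ 2 + 8 * M)) ^ 2 = M ^ 2 + 8 * M := Real.sq_sqrt hsqM
  have hsqrt_nn : 0 ≤ Real.sqrt (M ^ 2 + 8 * M) := Real.sqrt_nonneg _
  have hs4 : Real.sqrt (M ^ 2 + 8 * M) - M < 4 := by
    nlinarith [hsqrt_sq, hsqrt_nn]
  have hkey : ly ≤ Real.sqrt (M ^ 2 + 8 * M) - M ↔ 0 ≤ 1 - b + c := by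
    have hBc : 1 - b + c = (8 * M - 2 * M * ly - ly ^ 2) / (2 * M) := by
      rw [hbdef, hcdef]; field_simp; ring
    constructor
    · intro h
      rw [hBc]
      have h1 : ly + M ≤ Real.sqrt (M ^ 2 + 8 * M) := by linarith
      have h2 : (ly + M) ^ 2 ≤ M ^ 2 + 8 * M := by nlinarith [hsqrt_sq]
      have h3 : 0 ≤ 8 * M - 2 * M * ly - ly ^ 2 := by nlinarith
      positivity
    · intro h
      rw [hBc] at h
      have hnum : 0 ≤ 8 * M - 2 * M * ly - ly ^ 2 := by
        by_contra hn
        push_neg at hn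
        have : (8 * M - 2 * M * ly - ly ^ 2) / (2 * M) < 0 :=
          div_neg_of_neg_of_pos hn (by linarith)
        linarith
      have h2 : (ly + M) ^ 2 ≤ M ^ 2 + 8 * M := by nlinarith
      have h1 : ly + M ≤ Real.sqrt (M ^ 2 + 8 * M) := by
        nlinarith [hsqrt_sq, hsqrt_nn]
      linarith
  constructor
  · intro H
    have hles : ly ≤ Real.sqrt (M ^ 2 + 8 * M) - M := by
      by_contra hgt
      push_neg at hgt
      have hneg : 1 - b + c < 0 := by
        by_contra h'
        push_neg at h'
        exact absurd (hkey.mpr h') (not_le.mpr hgt)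
      have hΔnn : 0 ≤ b ^ 2 - 4 * c := by nlinarith [sq_nonneg (b - 2)]
      have hsΔ : (Real.sqrt (b ^ 2 - 4 * c)) ^ 2 = b ^ 2 - 4 * c := Real.sq_sqrt hΔnn
      have hsΔnn : 0 ≤ Real.sqrt (b ^ 2 - 4 * c) := Real.sqrt_nonneg _
      have hsgt : 2 - b < Real.sqrt (b ^ 2 - 4 * c) := by
        nlinarith [hsΔ, hsΔnn, sq_nonneg (2 - b - Real.sqrt (b ^ 2 - 4 * c))]
      have hroot : ((-b - Real.sqrt (b ^ 2 - 4 * c)) / 2) ^ 2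
          + b * ((-b - Real.sqrt (b ^ 2 - 4 * c)) / 2) + c = 0 := by
        linear_combination hsΔ / 4
      have hrootC : (((-b - Real.sqrt (b ^ 2 - 4 * c)) / 2 : ℝ) : ℂ) ^ 2
          + (b : ℂ) * (((-b - Real.sqrt (b ^ 2 - 4 * c)) / 2 : ℝ) : ℂ)
          + (c : ℂ) = 0 := by
        exact_mod_cast congrArg (fun t : ℝ => (t : ℂ)) hroot
      have hle := H _ (by rw [hcoef]; exact hrootC)
      rw [Complex.norm_real, Real.norm_eq_abs] at hle
      have hrneg : (-b - Real.sqrt (b ^ 2 - 4 * c)) / 2 < -1 := by linarith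
      rw [abs_of_neg (by linarith)] at hle
      linarith
    exact ⟨by linarith, hles⟩
  · rintro ⟨h4, hles⟩ A hA
    rw [hcoef] at hA
    have hB2 : 0 ≤ 1 - b + c := hkey.mp hles
    by_cases him : A.im = 0
    · set x : ℝ := A.re with hxdef
      have hAx : A = (x : ℂ) := Complex.ext rfl (by simp [him])
      rw [hAx] at hA
      have hroot : x ^ 2 + b * x + c = 0 := by
        have h0 : ((x ^ 2 + b * x + c : ℝ) : ℂ) = 0 := by push_cast; linear_combination hA
        exact_mod_cast h0
      rw [hAx, Complex.norm_real, Real.norm_eq_abs, abs_le]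
      constructor
      · by_contra hx
        push_neg at hx
        have hfac : (x + 1) * (x - 1 + b) = -(1 - b + c) := by linear_combination hroot
        have h3 : 0 ≤ x - 1 + b := by
          by_contra hq
          push_neg at hq
          nlinarith
        linarith
      · by_contra hx
        push_neg at hx
        have hfac : (x - 1) * (x + 1 + b) = -(1 + b + c) := by linear_combination hroot
        have h3 : x + 1 + b ≤ 0 := by
          by_contra hq
          push_neg at hq
          nlinarith
        linarith
    · have hconj : (starRingEnd ℂ) A ^ 2 + (b : ℂ) * (starRingEnd ℂ) A + (c : ℂ) = 0 := by
        have h0 := congrArg (starRingEnd ℂ) hA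
        rw [map_add, map_add, map_pow, map_mul, Complex.conj_ofReal, Complex.conj_ofReal,
          map_zero] at h0
        exact h0
      have hfac : ((starRingEnd ℂ) A - A) * ((starRingEnd ℂ) A + (b : ℂ) + A) = 0 := by
        linear_combination hconj - hA
      rcases mul_eq_zero.mp hfac with h | h
      · exact absurd ((Complex.conj_eq_iff_im).mp (sub_eq_zero.mp h)) him
      · have hconjA : (starRingEnd ℂ) A = -(b : ℂ) - A := by linear_combination h
        have hns : ((Complex.normSq A : ℝ) : ℂ) = (c : ℂ) := by
          rw [← Complex.mul_conj]
          linear_combination A * hconjA - hA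
        have hns' : Complex.normSq A = c := by exact_mod_cast hns
        have habs : ‖A‖ ^ 2 = c := by rw [Complex.sq_norm, hns']
        nlinarith [norm_nonneg A, habs, hc1]
end
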